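/- There exist ε₀ > 0, δ₀ > 0 and a constant C₃ > 0, all independent of (ζ, ε, k, r), such that for every δ ∈ (0, δ₀], every ε ∈ (0, ε₀], every k ∈ ℤ, every r ∈ ℤ \ {0}, and every ζ ∈ Ξ with X_k ∈ Γ_{δ/|r|}(β_l) and X_{k−r} ∈ Γ_{δ/|r|}(β_l), one has |E_{i,N}(ε, k, k−r)(ζ)| ≥ C₃ |X_k| / |r| or |E_{i,N}(ε, k, k−r)(ζ)| ≥ C₃ |X_{k−r}|. -/

import Mathlib

noncomputable section

open scoped RealInnerProductSpace

/-- `ℝ³` with the Euclidean norm, coordinates `ζ = (σ, γ, η) = (ζ 0, ζ 1, ζ 2)`. -/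
abbrev E3 : Type := EuclideanSpace ℝ (Fin 3)

/-- The frequency set `Ξ := {ζ ∈ ℝ³ : γ ≥ 0} \ {0}`. -/
def Xi : Set E3 := {ζ : E3 | 0 ≤ ζ 1 ∧ ζ ≠ 0}

/-- The cone `Γ_δ(β) := {ζ ∈ Ξ : |ζ/|ζ| − β| ≤ δ or |ζ/|ζ| + β| ≤ δ}`. -/
def cone (β : E3) (δ : ℝ) : Set E3 :=
  {ζ : E3 | ζ ∈ Xi ∧ (‖‖ζ‖⁻¹ • ζ - β‖ ≤ δ ∨ ‖‖ζ‖⁻¹ • ζ + β‖ ≤ δ)}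

/-- `X_k := ζ + (k/ε) β_l`. -/
def Xk (βl ζ : E3) (ε : ℝ) (k : ℤ) : E3 := ζ + (((k : ℝ)) / ε) • βl

/-- A bi-infinite integer sequence is admissible if it is strictly increasing or
strictly decreasing. -/
def Admissible (k : ℤ → ℤ) : Prop := StrictMono k ∨ StrictAnti k

/-- The oscillatory exponent `E_{i,N}(ε, k, k−r)(ζ) := ω_i(X_k) − (r/ε) ω_N(β_l) − ω_N(X_{k−r})`. -/
def EiN (ωi ωN : E3 → ℂ) (βl : E3) (ε : ℝ) (k r : ℤ) (ζ : E3) : ℂ :=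
  ωi (Xk βl ζ ε k) - ((r : ℂ) / (ε : ℂ)) * ωN βl - ωN (Xk βl ζ ε (k - r))


/-- From membership in a cone of aperture `δ'`, extract the signed norm `s = ±‖X‖` with
`‖X - s • β‖ ≤ δ' * ‖X‖`. -/
lemma cone_elim {β : E3} {δ' : ℝ} {X : E3} (h : X ∈ cone β δ') :
    X ≠ 0 ∧ ∃ s : ℝ, |s| = ‖X‖ ∧ ‖X - s • β‖ ≤ δ' * ‖X‖ := by
  obtain ⟨⟨-, hX0⟩, hc⟩ := h
  refine ⟨hX0, ?_⟩
  have hn : (0 : ℝ) < ‖X‖ := norm_pos_iff.mpr hX0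
  rcases hc with hc | hc
  · refine ⟨‖X‖, abs_of_nonneg hn.le, ?_⟩
    have hrw : X - ‖X‖ • β = ‖X‖ • (‖X‖⁻¹ • X - β) := by
      rw [smul_sub, smul_inv_smul₀ hn.ne']
    rw [hrw, norm_smul, Real.norm_eq_abs, abs_of_pos hn, mul_comm]
    exact mul_le_mul_of_nonneg_right hc hn.le
  · refine ⟨-‖X‖, by rw [abs_neg, abs_of_nonneg hn.le], ?_⟩
    have hrw : X - (-‖X‖) • β = ‖X‖ • (‖X‖⁻¹ • X + β) := by
      rw [smul_add, smul_inv_smul₀ hn.ne', neg_smul, sub_neg_eq_add]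
    rw [hrw, norm_smul, Real.norm_eq_abs, abs_of_pos hn, mul_comm]
    exact mul_le_mul_of_nonneg_right hc hn.le

set_option maxHeartbeats 1000000 in
/-- The good case `j = N` (where `Ω_{i,N} = −1`): there are `ε₀, δ₀, C₃ > 0`, independent of
`(ζ, ε, k, r)`, such that whenever `X_k, X_{k−r} ∈ Γ_{δ/|r|}(β_l)`, one has
`|E_{i,N}| ≥ C₃|X_k|/|r|` or `|E_{i,N}| ≥ C₃|X_{k−r}|`. -/
theorem stmt_7 (βl : E3) (hβlu : ‖βl‖ = 1) (hβl1 : βl 1 = 0)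
    (L : ℝ) (hL : 0 < L) (ωi ωN : E3 → ℂ)
    (hiLip : LipschitzWith (Real.toNNReal L) ωi)
    (hNLip : LipschitzWith (Real.toNNReal L) ωN)
    (hiLin : ∀ s : ℝ, ωi (s • βl) = (s : ℂ) * ωi βl)
    (hNLin : ∀ s : ℝ, ωN (s • βl) = (s : ℂ) * ωN βl)
    (hne : ωi βl ≠ ωN βl) :
    ∃ ε₀ > (0 : ℝ), ∃ δ₀ > (0 : ℝ), ∃ C₃ > (0 : ℝ),
      ∀ δ : ℝ, 0 < δ → δ ≤ δ₀ →
      ∀ ε : ℝ, 0 < ε → ε ≤ ε₀ →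
      ∀ k r : ℤ, r ≠ 0 →
      ∀ ζ ∈ Xi,
        Xk βl ζ ε k ∈ cone βl (δ / ((|r| : ℤ) : ℝ)) →
        Xk βl ζ ε (k - r) ∈ cone βl (δ / ((|r| : ℤ) : ℝ)) →
        (C₃ * ‖Xk βl ζ ε k‖ / ((|r| : ℤ) : ℝ) ≤ ‖EiN ωi ωN βl ε k r ζ‖ ∨
         C₃ * ‖Xk βl ζ ε (k - r)‖ ≤ ‖EiN ωi ωN βl ε k r ζ‖) := by
  classical
  set d : ℝ := ‖ωi βl - ωN βl‖ with hd_def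
  have hd : 0 < d := by
    simpa [hd_def, sub_eq_zero] using hne
  set CN : ℝ := ‖ωN βl‖ with hCN_def
  have hCN : 0 ≤ CN := norm_nonneg _
  set Cb : ℝ := L + CN + 1 with hCb_def
  have hCb : 0 < Cb := by positivity
  refine ⟨1, one_pos, min 1 (d / (6 * Cb)), lt_min one_pos (by positivity), d / 2,
    by positivity, ?_⟩
  intro δ hδ hδ0 ε hε hε0 k r hr ζ hζ hconeX hconeY
  left
  set X : E3 := Xk βl ζ ε k with hX_def
  set Y : E3 := Xk βl ζ ε (k - r) with hY_def
  set R : ℝ := ((|r| : ℤ) : ℝ) with hR_def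
  have hR1 : (1 : ℝ) ≤ R := by
    rw [hR_def]
    exact_mod_cast Int.one_le_abs hr
  have hRpos : (0 : ℝ) < R := lt_of_lt_of_le one_pos hR1
  set δ' : ℝ := δ / R with hδ'_def
  have hδ'pos : 0 < δ' := by positivity
  have hδ'le : δ' ≤ δ := by
    rw [hδ'_def]
    exact div_le_self hδ.le hR1
  have hδ'1 : δ' ≤ 1 := hδ'le.trans (hδ0.trans (min_le_left _ _))
  have hδ'd : δ' ≤ d / (6 * Cb) := hδ'le.trans (hδ0.trans (min_le_right _ _))
  obtain ⟨hX0, s, hsabs, hsX⟩ := cone_elim hconeX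
  obtain ⟨hY0, t, htabs, htY⟩ := cone_elim hconeY
  have hXpos : (0 : ℝ) < ‖X‖ := norm_pos_iff.mpr hX0
  have hYpos : (0 : ℝ) < ‖Y‖ := norm_pos_iff.mpr hY0
  set ρ : ℝ := (r : ℝ) / ε with hρ_def
  have hXY : X - Y = ρ • βl := by
    rw [hX_def, hY_def, hρ_def]
    simp only [Xk]
    push_cast
    module
  set eX : E3 := X - s • βl with heX_def
  set eY : E3 := Y - t • βl with heY_def
  have heX : ‖eX‖ ≤ δ' * ‖X‖ := hsX
  have heY : ‖eY‖ ≤ δ' * ‖Y‖ := htY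
  have heXY : eX - eY = (ρ - s + t) • βl := by
    rw [heX_def, heY_def]
    have : X - s • βl - (Y - t • βl) = (X - Y) - s • βl + t • βl := by module
    rw [this, hXY]
    module
  set a : ℝ := ⟪βl, eX⟫ with ha_def
  set u : ℝ := ⟪βl, eY⟫ with hu_def
  have hβl2 : ⟪βl, βl⟫ = 1 := by
    rw [real_inner_self_eq_norm_sq, hβlu, one_pow]
  have hau : a - u = ρ - s + t := by
    have h1 : ⟪βl, eX - eY⟫ = ρ - s + t := by
      rw [heXY, real_inner_smul_right, hβl2, mul_one]
    rw [ha_def, hu_def, ← inner_sub_right, h1]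
  -- the parallel component of eY is quadratically small
  have hYsum : Y = t • βl + eY := by rw [heY_def]; module
  have hu_quad : 2 * t * u = -‖eY‖ ^ 2 := by
    have h1 : ‖Y‖ ^ 2 = ‖t • βl‖ ^ 2 + 2 * ⟪t • βl, eY⟫ + ‖eY‖ ^ 2 := by
      rw [← norm_add_sq_real, ← hYsum]
    have h2 : ‖t • βl‖ ^ 2 = ‖Y‖ ^ 2 := by
      rw [norm_smul, Real.norm_eq_abs, hβlu, mul_one, sq_abs, ← sq_abs, htabs]
    have h3 : ⟪t • βl, eY⟫ = t * u := by rw [real_inner_smul_left, hu_def]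
    rw [h2, h3] at h1
    linarith
  have hu_bound : |u| ≤ δ' / 2 * ‖eY‖ := by
    have h1 : 2 * ‖Y‖ * |u| = ‖eY‖ ^ 2 := by
      have : |2 * t * u| = 2 * ‖Y‖ * |u| := by
        rw [abs_mul, abs_mul, abs_two, ← htabs]
      rw [← this, hu_quad, abs_neg, abs_pow, abs_norm]
    have h2 : ‖eY‖ ^ 2 ≤ δ' * ‖Y‖ * ‖eY‖ := by
      rw [sq]
      exact mul_le_mul_of_nonneg_right heY (norm_nonneg _)
    have h4 : 2 * ‖Y‖ * |u| ≤ 2 * ‖Y‖ * (δ' / 2 * ‖eY‖) := by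
      rw [h1]
      calc ‖eY‖ ^ 2 ≤ δ' * ‖Y‖ * ‖eY‖ := h2
        _ = 2 * ‖Y‖ * (δ' / 2 * ‖eY‖) := by ring
    exact le_of_mul_le_mul_left h4 (by positivity)
  -- the perpendicular components of eX and eY agree
  have hperp_eq : eY - u • βl = eX - a • βl := by
    have h2 : eX - eY = (a - u) • βl := by rw [hau]; exact heXY
    have h3 : eX = eY + (a - u) • βl := by rw [← h2]; module
    rw [h3, sub_smul]
    module
  have hperp_le : ‖eY - u • βl‖ ≤ ‖eX‖ := by
    rw [hperp_eq]
    have h2 : ⟪eX, βl⟫ = a := by rw [ha_def, real_inner_comm]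
    have h1 : ‖eX - a • βl‖ ^ 2 = ‖eX‖ ^ 2 - a ^ 2 := by
      have h0 := norm_sub_sq_real eX (a • βl)
      rw [real_inner_smul_right, h2, norm_smul, Real.norm_eq_abs, hβlu, mul_one] at h0
      rw [h0, sq_abs]
      ring
    have h3 : ‖eX - a • βl‖ ^ 2 ≤ ‖eX‖ ^ 2 := by
      rw [h1]; linarith [sq_nonneg a]
    have h4 := Real.sqrt_le_sqrt h3
    rwa [Real.sqrt_sq (norm_nonneg _), Real.sqrt_sq (norm_nonneg _)] at h4
  have heY2 : ‖eY‖ ≤ 2 * ‖eX‖ := by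
    have h1 : ‖eY‖ ≤ |u| + ‖eY - u • βl‖ := by
      calc ‖eY‖ = ‖u • βl + (eY - u • βl)‖ := by rw [add_sub_cancel]
        _ ≤ ‖u • βl‖ + ‖eY - u • βl‖ := norm_add_le _ _
        _ = |u| + ‖eY - u • βl‖ := by rw [norm_smul, Real.norm_eq_abs, hβlu, mul_one]
    have h2 : |u| ≤ δ' / 2 * (2 * ‖eX‖) + (1 - δ') * ‖eY‖ → True := fun _ => trivial
    have h3 : δ' / 2 * ‖eY‖ ≤ 1 / 2 * ‖eY‖ :=
      mul_le_mul_of_nonneg_right (by linarith) (norm_nonneg _)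
    have := hu_bound
    have := hperp_le
    linarith
  -- the error in the telescoping identity
  have ha_bound : |a| ≤ ‖eX‖ := by
    have := abs_real_inner_le_norm βl eX
    rwa [hβlu, one_mul] at this
  have hu_bound' : |u| ≤ ‖eY‖ := by
    have := abs_real_inner_le_norm βl eY
    rwa [hβlu, one_mul] at this
  have herr : |s - t - ρ| ≤ 3 * ‖eX‖ := by
    have h1 : s - t - ρ = u - a := by linarith [hau]
    rw [h1]
    have habs : |u - a| ≤ |u| + |a| := by
      simpa [sub_eq_add_neg] using abs_add_le u (-a)
    calc |u - a| ≤ |u| + |a| := habs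
      _ ≤ 2 * ‖eX‖ + ‖eX‖ := add_le_add (hu_bound'.trans heY2) ha_bound
      _ = 3 * ‖eX‖ := by ring
  -- Lipschitz bounds
  have hLcoe : ((Real.toNNReal L : NNReal) : ℝ) = L := Real.coe_toNNReal L hL.le
  have hA : ‖ωi X - (s : ℂ) * ωi βl‖ ≤ L * ‖eX‖ := by
    have h1 := hiLip.dist_le_mul X (s • βl)
    rw [Complex.dist_eq, dist_eq_norm, hiLin s, hLcoe, ← heX_def] at h1
    exact h1
  have hB : ‖ωN Y - (t : ℂ) * ωN βl‖ ≤ L * ‖eY‖ := by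
    have h1 := hNLip.dist_le_mul Y (t • βl)
    rw [Complex.dist_eq, dist_eq_norm, hNLin t, hLcoe, ← heY_def] at h1
    exact h1
  -- decomposition of the exponent
  have hdecomp : (s : ℂ) * (ωi βl - ωN βl) =
      EiN ωi ωN βl ε k r ζ - (ωi X - (s : ℂ) * ωi βl) + (ωN Y - (t : ℂ) * ωN βl)
        - ((s - t - ρ : ℝ) : ℂ) * ωN βl := by
    have hρc : ((ρ : ℝ) : ℂ) = (r : ℂ) / (ε : ℂ) := by
      rw [hρ_def]; push_cast; ring
    simp only [EiN, ← hX_def, ← hY_def]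
    push_cast [hρc]
    ring
  have tri : ∀ x y : ℂ, ‖x - y‖ ≤ ‖x‖ + ‖y‖ := by
    intro x y
    simpa [sub_eq_add_neg] using norm_add_le x (-y)
  have hmain : ‖X‖ * d ≤ ‖EiN ωi ωN βl ε k r ζ‖
      + L * ‖eX‖ + L * ‖eY‖ + 3 * ‖eX‖ * CN := by
    have h0 : ‖X‖ * d = ‖(s : ℂ) * (ωi βl - ωN βl)‖ := by
      rw [norm_mul, Complex.norm_real, Real.norm_eq_abs, hsabs, hd_def]
    have h1 : ‖((s - t - ρ : ℝ) : ℂ) * ωN βl‖ ≤ 3 * ‖eX‖ * CN := by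
      rw [norm_mul, Complex.norm_real, Real.norm_eq_abs, hCN_def]
      exact mul_le_mul_of_nonneg_right herr hCN
    calc ‖X‖ * d = ‖(s : ℂ) * (ωi βl - ωN βl)‖ := h0
      _ ≤ ‖EiN ωi ωN βl ε k r ζ - (ωi X - (s : ℂ) * ωi βl)
            + (ωN Y - (t : ℂ) * ωN βl)‖ + ‖((s - t - ρ : ℝ) : ℂ) * ωN βl‖ := by
          rw [hdecomp]; exact tri _ _
      _ ≤ ‖EiN ωi ωN βl ε k r ζ - (ωi X - (s : ℂ) * ωi βl)‖
            + ‖ωN Y - (t : ℂ) * ωN βl‖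
            + ‖((s - t - ρ : ℝ) : ℂ) * ωN βl‖ := by
          have := norm_add_le (EiN ωi ωN βl ε k r ζ - (ωi X - (s : ℂ) * ωi βl))
            (ωN Y - (t : ℂ) * ωN βl)
          linarith [h1]
      _ ≤ ‖EiN ωi ωN βl ε k r ζ‖ + ‖ωi X - (s : ℂ) * ωi βl‖
            + ‖ωN Y - (t : ℂ) * ωN βl‖
            + ‖((s - t - ρ : ℝ) : ℂ) * ωN βl‖ := by
          have := tri (EiN ωi ωN βl ε k r ζ) (ωi X - (s : ℂ) * ωi βl)
          linarith
      _ ≤ ‖EiN ωi ωN βl ε k r ζ‖ + L * ‖eX‖ + L * ‖eY‖ + 3 * ‖eX‖ * CN := by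
          linarith [hA, hB, h1]
  -- conclude
  have hfinal : d / 2 * ‖X‖ ≤ ‖EiN ωi ωN βl ε k r ζ‖ := by
    have herrs : L * ‖eX‖ + L * ‖eY‖ + 3 * ‖eX‖ * CN ≤ 3 * δ' * (L + CN) * ‖X‖ := by
      have hX' : ‖eX‖ ≤ δ' * ‖X‖ := heX
      have hY' : ‖eY‖ ≤ 2 * (δ' * ‖X‖) := heY2.trans (by linarith)
      have hstep : L * ‖eX‖ + L * ‖eY‖ + 3 * ‖eX‖ * CN
          ≤ L * (δ' * ‖X‖) + L * (2 * (δ' * ‖X‖)) + 3 * (δ' * ‖X‖) * CN := by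
        have t1 : L * ‖eX‖ ≤ L * (δ' * ‖X‖) := mul_le_mul_of_nonneg_left hX' hL.le
        have t2 : L * ‖eY‖ ≤ L * (2 * (δ' * ‖X‖)) := mul_le_mul_of_nonneg_left hY' hL.le
        have t3 : 3 * ‖eX‖ * CN ≤ 3 * (δ' * ‖X‖) * CN := by
          apply mul_le_mul_of_nonneg_right _ hCN
          linarith
        linarith
      calc L * ‖eX‖ + L * ‖eY‖ + 3 * ‖eX‖ * CN
          ≤ L * (δ' * ‖X‖) + L * (2 * (δ' * ‖X‖)) + 3 * (δ' * ‖X‖) * CN := hstep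
        _ = 3 * δ' * (L + CN) * ‖X‖ := by ring
    have hδ'Cb : 3 * δ' * (L + CN) * ‖X‖ ≤ d / 2 * ‖X‖ := by
      have h1 : 3 * δ' * (L + CN) ≤ d / 2 := by
        have h2 : δ' * (6 * Cb) ≤ d := by
          calc δ' * (6 * Cb) ≤ d / (6 * Cb) * (6 * Cb) := by
                exact mul_le_mul_of_nonneg_right hδ'd (by positivity)
            _ = d := by field_simp
        have h3 : 3 * δ' * (L + CN) ≤ 3 * δ' * Cb := by
          apply mul_le_mul_of_nonneg_left _ (by positivity)
          rw [hCb_def]; linarith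
        have h4 : 3 * δ' * Cb = δ' * (6 * Cb) / 2 := by ring
        linarith
      exact mul_le_mul_of_nonneg_right h1 (norm_nonneg _)
    linarith
  calc d / 2 * ‖X‖ / R ≤ d / 2 * ‖X‖ := by
        apply div_le_self (by positivity) hR1
    _ ≤ ‖EiN ωi ωN βl ε k r ζ‖ := hfinal


end
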